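/- In the Heun three-term recurrence A_i c_{i+1} − (B_i + q)c_i + C_i c_{i−1} = 0 with C_i = (i−1+α)(i−1+β), if α = −d for a non-negative integer d and no c_i with i ≤ d forces division by zero (i.e. A_i ≠ 0 for i ≤ d), then there exist values of q for which the sequence (c_i) satisfies c_i = 0 for all i > d, so the series solution is a polynomial of degree at most d. -/

import Mathlib

open Polynomial

/-- A-coefficient of the Heun recurrence. -/
noncomputable def heunA (a γ : ℂ) (i : ℕ) : ℂ := a * ((i : ℂ) + 1) * ((i : ℂ) + γ)

/-- B-coefficient of the Heun recurrence. -/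
noncomputable def heunB (a γ δ ε : ℂ) (i : ℕ) : ℂ :=
  (i : ℂ) * (((i : ℂ) - 1 + γ) * (a + 1) + a * δ + ε)

/-- C-coefficient of the Heun recurrence. -/
noncomputable def heunC (α β : ℂ) (i : ℕ) : ℂ := ((i : ℂ) - 1 + α) * ((i : ℂ) - 1 + β)

/-- The coefficients of the Heun series solution, as polynomials in the accessory
parameter `q`. -/
noncomputable def heunP (a γ δ ε α β : ℂ) : ℕ → Polynomial ℂ
  | 0 => 1
  | 1 => C (a * γ)⁻¹ * X
  | (n + 2) =>
      C (heunA a γ (n + 1))⁻¹ *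
        ((C (heunB a γ δ ε (n + 1)) + X) * heunP a γ δ ε α β (n + 1)
          - C (heunC α β (n + 1)) * heunP a γ δ ε α β n)

lemma heunP_deg (a γ δ ε α β : ℂ) (d : ℕ) (hA : ∀ i : ℕ, i ≤ d → heunA a γ i ≠ 0) :
    ∀ n : ℕ, n ≤ d + 1 →
      (heunP a γ δ ε α β n).coeff n ≠ 0 ∧ (heunP a γ δ ε α β n).natDegree ≤ n := by
  have haγ : a * γ ≠ 0 := by
    have := hA 0 (Nat.zero_le d)
    simpa [heunA] using this
  intro n
  induction n using Nat.strong_induction_on with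
  | _ n ih =>
    match n with
    | 0 => intro _; simp [heunP]
    | 1 =>
      intro _
      constructor
      · simp only [heunP, coeff_C_mul, coeff_X_one, mul_one]
        exact inv_ne_zero haγ
      · calc (C (a * γ)⁻¹ * X).natDegree ≤ (C (a*γ)⁻¹).natDegree + (X : ℂ[X]).natDegree :=
              natDegree_mul_le
          _ ≤ 1 := by rw [natDegree_C, natDegree_X]
    | (n + 2) =>
      intro hn
      have h1 : n + 1 ≤ d + 1 := by omega
      have h0 : n ≤ d + 1 := by omega
      obtain ⟨hc1, hd1⟩ := ih (n + 1) (by omega) h1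
      obtain ⟨_, hd0⟩ := ih n (by omega) h0
      have hAne : heunA a γ (n + 1) ≠ 0 := hA (n + 1) (by omega)
      constructor
      · have e1 : (heunP a γ δ ε α β (n + 1)).coeff (n + 2) = 0 :=
          coeff_eq_zero_of_natDegree_lt (by omega)
        have e0 : (heunP a γ δ ε α β n).coeff (n + 2) = 0 :=
          coeff_eq_zero_of_natDegree_lt (by omega)
        simp only [heunP, coeff_C_mul, coeff_sub, add_mul, coeff_add, coeff_X_mul,
          e1, e0, mul_zero, zero_sub, add_zero, zero_add]
        simp only [e1, mul_zero, zero_add, sub_zero]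
        exact mul_ne_zero (inv_ne_zero hAne) hc1
      · calc (heunP a γ δ ε α β (n + 2)).natDegree
            ≤ ((C (heunB a γ δ ε (n + 1)) + X) * heunP a γ δ ε α β (n + 1)
              - C (heunC α β (n + 1)) * heunP a γ δ ε α β n).natDegree := by
              rw [heunP]; exact natDegree_C_mul_le _ _
          _ ≤ max ((C (heunB a γ δ ε (n + 1)) + X) * heunP a γ δ ε α β (n + 1)).natDegree
              ((C (heunC α β (n + 1)) * heunP a γ δ ε α β n).natDegree) := natDegree_sub_le _ _
          _ ≤ n + 2 := by
              apply max_le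
              · calc ((C (heunB a γ δ ε (n + 1)) + X) * heunP a γ δ ε α β (n + 1)).natDegree
                    ≤ (C (heunB a γ δ ε (n + 1)) + X).natDegree
                        + (heunP a γ δ ε α β (n + 1)).natDegree := natDegree_mul_le
                  _ ≤ 1 + (n + 1) := by
                      gcongr
                      calc (C (heunB a γ δ ε (n + 1)) + X).natDegree
                          ≤ max (C (heunB a γ δ ε (n + 1))).natDegree (X : ℂ[X]).natDegree :=
                            natDegree_add_le _ _
                        _ ≤ 1 := by rw [natDegree_C, natDegree_X]; omega
                  _ = n + 2 := by omega
              · calc (C (heunC α β (n + 1)) * heunP a γ δ ε α β n).natDegree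
                    ≤ (C (heunC α β (n + 1))).natDegree + (heunP a γ δ ε α β n).natDegree :=
                      natDegree_mul_le
                  _ ≤ n + 2 := by simp; omega

lemma heunP_rec (a γ δ ε α β : ℂ) (n : ℕ) (q : ℂ) (hAne : heunA a γ (n + 1) ≠ 0) :
    heunA a γ (n + 1) * (heunP a γ δ ε α β (n + 2)).eval q
      - (heunB a γ δ ε (n + 1) + q) * (heunP a γ δ ε α β (n + 1)).eval q
      + heunC α β (n + 1) * (heunP a γ δ ε α β n).eval q = 0 := by
  rw [heunP]
  simp only [eval_mul, eval_C, eval_sub, eval_add, eval_X]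
  field_simp
  ring

theorem heun_polynomial_truncation (d : ℕ) (a β γ δ ε : ℂ) (α : ℂ) (hα : α = -(d : ℂ))
    (hA : ∀ i : ℕ, i ≤ d → a * ((i : ℂ) + 1) * ((i : ℂ) + γ) ≠ 0) :
    ∃ q : ℂ, ∃ c : ℕ → ℂ,
      c 0 = 1 ∧
      a * γ * c 1 = q * c 0 ∧
      (∀ i : ℕ, 1 ≤ i →
          (a * ((i : ℂ) + 1) * ((i : ℂ) + γ)) * c (i + 1)
            - ((i : ℂ) * (((i : ℂ) - 1 + γ) * (a + 1) + a * δ + ε) + q) * c i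
            + (((i : ℂ) - 1 + α) * ((i : ℂ) - 1 + β)) * c (i - 1) = 0) ∧
      (∀ i : ℕ, d < i → c i = 0) := by
  classical
  have hA' : ∀ i : ℕ, i ≤ d → heunA a γ i ≠ 0 := fun i hi => hA i hi
  have haγ : a * γ ≠ 0 := by
    have := hA 0 (Nat.zero_le d)
    simpa using this
  have hdeg := heunP_deg a γ δ ε α β d hA'
  obtain ⟨hcoeff, hnd⟩ := hdeg (d + 1) le_rfl
  have hPne : heunP a γ δ ε α β (d + 1) ≠ 0 := by
    intro h; exact hcoeff (by simp [h])
  have hndeq : (heunP a γ δ ε α β (d + 1)).natDegree = d + 1 :=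
    le_antisymm hnd (le_natDegree_of_ne_zero hcoeff)
  have hdegpos : 0 < (heunP a γ δ ε α β (d + 1)).degree := by
    rw [degree_eq_natDegree hPne, hndeq]
    exact_mod_cast Nat.succ_pos d
  obtain ⟨q, hq⟩ := Complex.exists_root hdegpos
  have hq' : (heunP a γ δ ε α β (d + 1)).eval q = 0 := hq
  set c : ℕ → ℂ := fun i => if i ≤ d then (heunP a γ δ ε α β i).eval q else 0 with hc
  have hcz : ∀ i : ℕ, d < i → c i = 0 := by
    intro i hi
    have h : ¬ i ≤ d := by omega
    simp only [hc, if_neg h]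
  have hceval : ∀ j : ℕ, j ≤ d + 1 → c j = (heunP a γ δ ε α β j).eval q := by
    intro j hj
    by_cases h : j ≤ d
    · simp only [hc, if_pos h]
    · have : j = d + 1 := by omega
      subst this
      rw [hq', hcz _ (by omega)]
  refine ⟨q, c, ?_, ?_, ?_, hcz⟩
  · simp [hc, heunP]
  · rw [hceval 0 (by omega), hceval 1 (by omega)]
    simp only [heunP, eval_one, eval_mul, eval_C, eval_X, mul_one]
    by_cases hd : d = 0
    · have h0 : (a * γ)⁻¹ * q = 0 := by
        have h := hq'
        rw [hd] at h
        simpa [heunP] using h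
      have hq0 : q = 0 := by
        rcases mul_eq_zero.mp h0 with h | h
        · exact absurd h (inv_ne_zero haγ)
        · exact h
      rw [hq0]; ring
    · field_simp
      exact mul_div_cancel_left₀ q haγ
  · intro i hi
    obtain ⟨m, rfl⟩ : ∃ m, i = m + 1 := ⟨i - 1, by omega⟩
    by_cases h1 : m + 1 ≤ d
    · have e1 := hceval (m + 1 + 1) (by omega)
      have e2 := hceval (m + 1) (by omega)
      have e3 := hceval (m + 1 - 1) (by omega)
      have hs : m + 1 + 1 = m + 2 := by omega
      rw [e1, e2, e3, Nat.add_sub_cancel, hs]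
      have hrec := heunP_rec a γ δ ε α β m q (hA' (m + 1) (by omega))
      simp only [heunA, heunB, heunC] at hrec
      push_cast at hrec ⊢
      linear_combination hrec
    · have hz1 : c (m + 1) = 0 := hcz _ (by omega)
      have hz2 : c (m + 1 + 1) = 0 := hcz _ (by omega)
      rw [hz1, hz2]
      by_cases h2 : m + 1 = d + 1
      · have hα0 : ((m + 1 : ℕ) : ℂ) - 1 + α = 0 := by
          rw [h2, hα]; push_cast; ring
        rw [hα0]; ring
      · have hz3 : c (m + 1 - 1) = 0 := hcz _ (by omega)
        rw [hz3]; ring
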